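/- Let 𝕍 = V ⊕ V* = E ⊕ F be a Lagrangian splitting with associated bivector π ∈ ∧²V (defined by π^♯(α) = -pr_V(p(α)), p the projection onto E along F). Then the graph of π equals the 'wedge product' Eᵀ ∧ F := {v⊕α : ∃ α₁, α₂ with v⊕α₁ ∈ E, v⊕α₂ ∈ F, α = α₂ - α₁}. In particular ran(π^♯) = ran(E) ∩ ran(F). -/

import Mathlib

open Module

/-- The pairing bilinear form on `𝕍 = V ⊕ V*`. -/
noncomputable def vPairing (K V : Type*) [Field K] [AddCommGroup V] [Module K V] :
    LinearMap.BilinForm K (V × Module.Dual K V) :=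
  LinearMap.mk₂ K (fun w u => w.2 u.1 + u.2 w.1)
    (fun w w' u => by simp; ring)
    (fun c w u => by simp; ring)
    (fun w u u' => by simp; ring)
    (fun c w u => by simp; ring)

/-- for a Lagrangian splitting `𝕍 = E ⊕ F` with projection `p` onto `E` along
`F`, the bivector `π` (with `π^♯(α) = -pr_V(p(α))`) has graph
`Gr_π = Eᵀ ∧ F = {v⊕α : ∃ α₁ α₂, v⊕α₁ ∈ E, v⊕α₂ ∈ F, α = α₂ - α₁}`; in particular
`ran(π^♯) = ran(E) ∩ ran(F)`. -/
theorem pure_spinors_stmt12 {K V : Type*} [Field K] [CharZero K] [AddCommGroup V] [Module K V]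
    [FiniteDimensional K V]
    (E F : Submodule K (V × Module.Dual K V))
    (hElag : E = (vPairing K V).orthogonal E)
    (hFlag : F = (vPairing K V).orthogonal F)
    (hcompl : IsCompl E F)
    (p : (V × Module.Dual K V) →ₗ[K] (V × Module.Dual K V))
    (hpE : ∀ w ∈ E, p w = w) (hpF : ∀ w ∈ F, p w = 0) :
    (∀ w : V × Module.Dual K V,
      w.1 = -(p ((0 : V), w.2)).1 ↔
        ∃ α₁ α₂ : Module.Dual K V, (w.1, α₁) ∈ E ∧ (w.1, α₂) ∈ F ∧ w.2 = α₂ - α₁) ∧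
    (∀ v : V,
      (∃ α : Module.Dual K V, v = -(p ((0 : V), α)).1) ↔
        ((∃ α₁ : Module.Dual K V, (v, α₁) ∈ E) ∧ (∃ α₂ : Module.Dual K V, (v, α₂) ∈ F))) := by
  have key : ∀ w : V × Module.Dual K V, p w ∈ E ∧ w - p w ∈ F := by
    intro w
    obtain ⟨e, f, he, hf, hw⟩ := Submodule.codisjoint_iff_exists_add_eq.mp hcompl.codisjoint w
    have hpw : p w = e := by rw [← hw, map_add, hpE e he, hpF f hf, add_zero]
    refine ⟨hpw ▸ he, ?_⟩
    rw [hpw, ← hw]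
    simpa using hf
  have main : ∀ w : V × Module.Dual K V,
      w.1 = -(p ((0 : V), w.2)).1 ↔
        ∃ α₁ α₂ : Module.Dual K V, (w.1, α₁) ∈ E ∧ (w.1, α₂) ∈ F ∧ w.2 = α₂ - α₁ := by
    intro w
    constructor
    · intro h
      obtain ⟨hE, hF⟩ := key ((0 : V), w.2)
      refine ⟨-(p ((0 : V), w.2)).2, w.2 - (p ((0 : V), w.2)).2, ?_, ?_, by abel⟩
      · have : ((w.1, -(p ((0 : V), w.2)).2) : V × Module.Dual K V)
            = -(p ((0 : V), w.2)) := by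
          ext <;> simp [h]
        rw [this]
        exact neg_mem hE
      · have : ((w.1, w.2 - (p ((0 : V), w.2)).2) : V × Module.Dual K V)
            = ((0 : V), w.2) - p ((0 : V), w.2) := by
          ext <;> simp [h]
        rw [this]
        exact hF
    · rintro ⟨α₁, α₂, h1, h2, h3⟩
      have : (((0 : V), w.2) : V × Module.Dual K V) = (w.1, α₂) - (w.1, α₁) := by
        ext <;> simp [h3]
      rw [this, map_sub, hpE _ h1, hpF _ h2]
      simp
  refine ⟨main, fun v => ?_⟩
  constructor
  · rintro ⟨α, hα⟩
    obtain ⟨α₁, α₂, h1, h2, -⟩ := (main (v, α)).mp hα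
    exact ⟨⟨α₁, h1⟩, ⟨α₂, h2⟩⟩
  · rintro ⟨⟨α₁, h1⟩, ⟨α₂, h2⟩⟩
    exact ⟨α₂ - α₁, (main (v, α₂ - α₁)).mpr ⟨α₁, α₂, h1, h2, rfl⟩⟩
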